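/- Let d ≥ 2 be an integer and c > 0 a real. If s, t ∈ (0,1) satisfy s < t, 1 - exp(-c·s^d) = s and 1 - exp(-c·t^d) = t (i.e., s is the smaller of two fixed points of g_{c,d} in (0,1)), then s < 1 - e^{-d}. -/

import Mathlib

lemma key_ineq (d x : ℝ) (hd : 2 ≤ d) (hx : d ≤ x) : d * x < Real.exp x - 1 := by
  have h0 : (0:ℝ) ≤ x := by linarith
  have h4 := Real.sum_le_exp_of_nonneg h0 4
  rw [show (4:ℕ) = 3+1 by rfl, Finset.sum_range_succ, Finset.sum_range_succ,
    Finset.sum_range_succ, Finset.sum_range_one] at h4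
  norm_num [Nat.factorial] at h4
  nlinarith [sq_nonneg (x - d), sq_nonneg (d - 3), mul_pos (by linarith : (0:ℝ) < d) (by linarith : (0:ℝ) < x)]

/-- Let `d ≥ 2` and `c > 0`. If `s, t ∈ (0,1)` satisfy `s < t` and both are fixed points
of `g_{c,d}`, then `s < 1 - e^{-d}`. -/
theorem smaller_fixed_point_lt (d : ℕ) (hd : 2 ≤ d) (c : ℝ) (hc : 0 < c) (s t : ℝ)
    (hs : s ∈ Set.Ioo (0 : ℝ) 1) (ht : t ∈ Set.Ioo (0 : ℝ) 1) (hst : s < t)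
    (hsfix : 1 - Real.exp (-c * s ^ d) = s) (htfix : 1 - Real.exp (-c * t ^ d) = t) :
    s < 1 - Real.exp (-(d : ℝ)) := by
  by_contra hcon
  push_neg at hcon
  obtain ⟨hs0, hs1⟩ := hs
  obtain ⟨ht0, ht1⟩ := ht
  have hd2 : (2:ℝ) ≤ (d:ℝ) := by exact_mod_cast hd
  set A := c * s ^ d with hAdef
  set B := c * t ^ d with hBdef
  have hA : 0 < A := mul_pos hc (pow_pos hs0 d)
  have hB : 0 < B := mul_pos hc (pow_pos ht0 d)
  have hAB : A < B := by
    apply mul_lt_mul_of_pos_left _ hc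
    exact pow_lt_pow_left₀ hst hs0.le (by omega)
  have hsA : Real.exp (-A) = 1 - s := by
    have : -c * s ^ d = -A := by rw [hAdef]; ring
    rw [← this]; linarith [hsfix]
  have htB : Real.exp (-B) = 1 - t := by
    have : -c * t ^ d = -B := by rw [hBdef]; ring
    rw [← this]; linarith [htfix]
  have hdA : (d:ℝ) ≤ A := by
    have h1 : Real.exp (-A) ≤ Real.exp (-(d:ℝ)) := by
      rw [hsA]; linarith
    have := Real.exp_le_exp.mp h1
    linarith
  have hdB : (d:ℝ) ≤ B := by linarith
  -- define F
  set F : ℝ → ℝ := fun L => (d:ℝ) * Real.log (1 - Real.exp (-L)) - Real.log L with hF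
  have hderiv : ∀ x : ℝ, 0 < x →
      HasDerivAt F ((d:ℝ) * (Real.exp (-x) / (1 - Real.exp (-x))) - 1/x) x := by
    intro x hx
    have hex : Real.exp (-x) < 1 := by
      rw [Real.exp_lt_one_iff]; linarith
    have h1 : HasDerivAt (fun L : ℝ => 1 - Real.exp (-L)) (Real.exp (-x)) x := by
      have := (Real.hasDerivAt_exp (-x)).comp x (hasDerivAt_neg x)
      simpa [Function.comp_def, Pi.sub_def] using (hasDerivAt_const x (1:ℝ)).sub this
    have h2 : HasDerivAt (fun L : ℝ => Real.log (1 - Real.exp (-L)))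
        (Real.exp (-x) / (1 - Real.exp (-x))) x := by
      have := (Real.hasDerivAt_log (by linarith : (1:ℝ) - Real.exp (-x) ≠ 0)).comp x h1
      simpa [div_eq_inv_mul, mul_comm, Function.comp_def] using this
    have h3 := (h2.const_mul (d:ℝ)).sub (Real.hasDerivAt_log hx.ne')
    simpa [one_div, Pi.sub_def] using h3
  have hanti : StrictAntiOn F (Set.Ici (d:ℝ)) := by
    apply strictAntiOn_of_deriv_neg (convex_Ici _)
    · intro x hx
      have hx0 : (0:ℝ) < x := lt_of_lt_of_le (by linarith) hx
      exact (hderiv x hx0).continuousAt.continuousWithinAt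
    · intro x hx
      rw [interior_Ici] at hx
      have hx0 : (0:ℝ) < x := by have := hx; simp only [Set.mem_Ioi] at this; linarith
      rw [(hderiv x hx0).deriv]
      have hex : Real.exp (-x) < 1 := by rw [Real.exp_lt_one_iff]; linarith
      have hex0 : 0 < Real.exp (-x) := Real.exp_pos _
      have hkey := key_ineq (d:ℝ) x hd2 (le_of_lt hx)
      -- d * x * exp(-x) < 1 - exp(-x)
      have h5 : (d:ℝ) * x * Real.exp (-x) < 1 - Real.exp (-x) := by
        have hexx : Real.exp (-x) * Real.exp x = 1 := by
          rw [← Real.exp_add]; simp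
        nlinarith [Real.exp_pos x]
      have hgoal : (d:ℝ) * (Real.exp (-x) / (1 - Real.exp (-x))) < 1 / x := by
        rw [mul_div_assoc', div_lt_div_iff₀ (by linarith) hx0]
        nlinarith
      linarith
  -- F A = F B
  have hval : ∀ L x : ℝ, 0 < L → 0 < x → x < 1 → Real.exp (-L) = 1 - x → L = c * x ^ d →
      F L = Real.log L - Real.log c - Real.log L := by
    intro L x hL hx hx1 hexp hLc
    have h1 : (1:ℝ) - Real.exp (-L) = x := by rw [hexp]; ring
    have h2 : Real.log L = Real.log c + (d:ℝ) * Real.log x := by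
      rw [hLc, Real.log_mul hc.ne' (pow_ne_zero d hx.ne'), Real.log_pow]
    rw [hF]; simp only
    rw [h1]
    linarith
  have hFA : F A = Real.log A - Real.log c - Real.log A := hval A s hA hs0 hs1 hsA hAdef
  have hFB : F B = Real.log B - Real.log c - Real.log B := hval B t hB ht0 ht1 htB hBdef
  have : F B < F A := hanti (Set.mem_Ici.mpr hdA) (Set.mem_Ici.mpr hdB) hAB
  rw [hFA, hFB] at this
  linarith
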